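/- Let ν ≡ 2 (mod 6) be an integer with ν ≥ 8. Then there exists a partial triple system PTS(ν,6) with exactly (6·C(ν,2) − ν − 1)/3 triples whose leave contains ν/2 pairwise disjoint edges, i.e., there exist ν/2 pairwise disjoint pairs of vertices each contained in fewer than 6 triples (counted with multiplicity). -/

import Mathlib

/-- The function `g(ν, λ, s)` from the paper. -/
noncomputable def gfun (ν lam s : ℕ) : ℤ :=
  if ν ≤ 2 then 0
  else if (ν % 6 = 0 ∧ lam % 2 = 1) ∨
          (ν % 6 = 2 ∧ (lam % 6 = 1 ∨ lam % 6 = 3)) ∨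
          (ν % 6 = 2 ∧ lam % 6 = 5 ∧ s < ν / 2) ∨
          (ν % 6 = 4 ∧ lam % 2 = 1 ∧ s < ν / 2) then
    ⌊(lam : ℚ) / 3 * (ν.choose 2 : ℚ) - (ν : ℚ) / 6⌋
  else if (ν % 6 = 2 ∧ lam % 6 = 5 ∧ s = ν / 2) ∨
          (ν % 6 = 4 ∧ lam % 2 = 1 ∧ s = ν / 2) then
    ⌊(lam : ℚ) / 3 * (ν.choose 2 : ℚ) - (ν : ℚ) / 6⌋ - 1
  else if (ν % 6 = 2 ∧ lam % 6 = 4 ∧ s = 0) ∨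
          (ν % 6 = 5 ∧ lam % 3 = 1 ∧ s = 0) then
    ⌊(lam : ℚ) / 3 * (ν.choose 2 : ℚ)⌋ - 1
  else ⌊(lam : ℚ) / 3 * (ν.choose 2 : ℚ) - 2 * (s : ℚ) / 3⌋

/-- The function `f(n, ν, Δ₂)` from the paper. -/
noncomputable def ffun (n ν Δ : ℕ) : ℤ :=
  ⌊(ν : ℚ) * ((n : ℚ) - (ν : ℚ)) * (Δ : ℚ) / 2⌋ +
  if Even ((n - ν) * Δ) ∨ Even ν then gfun ν Δ 0 else gfun ν Δ (ν / 2)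

/-- The codegree of a pair `p` of vertices in a 3-multigraph `H`: the number of
triples of `H` (with multiplicity) containing `p`. -/
def codegPair {V : Type*} [DecidableEq V] (H : Multiset (Finset V)) (p : Finset V) : ℕ :=
  Multiset.card (H.filter fun t => p ⊆ t)

open Finset

namespace S17
variable {k : ℕ}

abbrev uu (k : ℕ) : ℕ := 6 * k + 1
instance (k : ℕ) : NeZero (uu k) := ⟨by show 6*k+1 ≠ 0; omega⟩
abbrev Z (k : ℕ) := ZMod (uu k)
abbrev W (k : ℕ) := Option (Z k)

lemma codeg_eq {V : Type*} [DecidableEq V] (H : Multiset (Finset V)) (p : Finset V) :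
    codegPair H p = Multiset.countP (fun t => p ⊆ t) H :=
  (Multiset.countP_eq_card_filter _ _).symm

lemma countP_bind {α β : Type*} (s : Multiset α) (f : α → Multiset β) (p : β → Prop)
    [DecidablePred p] :
    Multiset.countP p (s.bind f) = (s.map fun a => Multiset.countP p (f a)).sum := by
  induction s using Multiset.induction_on with
  | empty => simp
  | cons a s ih => simp [Multiset.cons_bind, ih]

lemma cast_inj_lt {a b : ℕ} (ha : a < 6 * k + 1) (hb : b < 6 * k + 1) (h : (a : Z k) = (b : Z k)) : a = b := by
  have := congrArg ZMod.val h
  rwa [ZMod.val_natCast_of_lt ha, ZMod.val_natCast_of_lt hb] at this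

lemma dvd_of_cast_eq_zero {m : ℕ} (h : (m : Z k) = 0) : uu k ∣ m :=
  (ZMod.natCast_eq_zero_iff m (uu k)).mp h

lemma ncast_ne_zero {m : ℕ} (h0 : m ≠ 0) (h2 : m < 2 * (6 * k + 1)) (h3 : m ≠ 6 * k + 1) :
    (m : Z k) ≠ 0 := by
  intro hh
  have hd := dvd_of_cast_eq_zero hh
  have huu : uu k = 6 * k + 1 := rfl
  rw [huu] at hd
  rcases hd with ⟨c, rfl⟩
  have hc : c < 2 := by by_contra hcc; push_neg at hcc; nlinarith
  interval_cases c <;> omega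

lemma one_nz (hk : 1 ≤ k) : (1 : Z k) ≠ 0 := by
  have := ncast_ne_zero (k := k) (m := 1) (by omega) (by omega) (by omega); simpa using this

lemma two_nz (hk : 1 ≤ k) : (2 : Z k) ≠ 0 := by
  have := ncast_ne_zero (k := k) (m := 2) (by omega) (by omega) (by omega); simpa using this

lemma three_nz (hk : 1 ≤ k) : (3 : Z k) ≠ 0 := by
  have := ncast_ne_zero (k := k) (m := 3) (by omega) (by omega) (by omega); simpa using this

lemma four_nz (hk : 1 ≤ k) : (4 : Z k) ≠ 0 := by
  have := ncast_ne_zero (k := k) (m := 4) (by omega) (by omega) (by omega); simpa using this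

/-! ### The construction -/

def xw (i : Z k) : ℕ := if i.val % 3 = 2 then 0 else 1
def yw (i : Z k) : ℕ := 2 - xw i - xw (i + 1)
def zw (i : Z k) : ℕ := 2 - xw (i + 1)

def t3 (a b c : Z k) : Finset (W k) := {some a, some b, some c}
def ti (a b : Z k) : Finset (W k) := {none, some a, some b}

def ORB (k : ℕ) : Multiset (Finset (W k)) :=
  (Finset.Icc 2 (3 * k)).val.bind fun a =>
    2 • (Finset.univ.val.map fun i : Z k => t3 i (i + (a : Z k)) (i + 2 * (a : Z k)))

def S1 (k : ℕ) : Multiset (Finset (W k)) :=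
  Finset.univ.val.map fun i : Z k => ti i (i + 1)

def XA (k : ℕ) : Multiset (Finset (W k)) :=
  Finset.univ.val.bind fun i : Z k => xw i • ({t3 (i - 1) i (i + 1)} : Multiset _)

def YB (k : ℕ) : Multiset (Finset (W k)) :=
  Finset.univ.val.bind fun i : Z k => yw i • ({ti i (i + 1)} : Multiset _)

def ZC (k : ℕ) : Multiset (Finset (W k)) :=
  Finset.univ.val.bind fun i : Z k => zw i • ({ti i (i + 2)} : Multiset _)

def H0 (k : ℕ) : Multiset (Finset (W k)) := ORB k + S1 k + XA k + YB k + ZC k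

lemma codeg_H0 (pr : Finset (W k)) :
    codegPair (H0 k) pr = codegPair (ORB k) pr + codegPair (S1 k) pr + codegPair (XA k) pr
      + codegPair (YB k) pr + codegPair (ZC k) pr := by
  simp [H0, codeg_eq, Multiset.countP_add]

/-! ### codegree formulas -/

lemma codeg_S1 (pr : Finset (W k)) :
    codegPair (S1 k) pr = (Finset.univ.filter fun i : Z k => pr ⊆ ti i (i + 1)).card := by
  rw [codeg_eq, S1, Multiset.countP_map]; rfl

lemma codeg_wsum (w : Z k → ℕ) (f : Z k → Finset (W k)) (pr : Finset (W k)) :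
    codegPair (Finset.univ.val.bind fun i : Z k => w i • ({f i} : Multiset _)) pr
      = ∑ i ∈ Finset.univ.filter (fun i : Z k => pr ⊆ f i), w i := by
  rw [codeg_eq, countP_bind]
  have hsingle : ∀ i : Z k, Multiset.countP (fun t => pr ⊆ t) ({f i} : Multiset _)
      = if pr ⊆ f i then 1 else 0 := by
    intro i
    show Multiset.countP _ (f i ::ₘ 0) = _
    rw [Multiset.countP_cons, Multiset.countP_zero, zero_add]
  simp only [Multiset.countP_nsmul, hsingle]
  rw [Finset.sum_filter]
  show (∑ i : Z k, w i * if pr ⊆ f i then 1 else 0) = _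
  refine Finset.sum_congr rfl fun i _ => ?_
  split <;> simp

lemma codeg_ORB (pr : Finset (W k)) :
    codegPair (ORB k) pr = ∑ a ∈ Finset.Icc 2 (3 * k),
      2 * (Finset.univ.filter fun i : Z k =>
        pr ⊆ t3 i (i + (a : Z k)) (i + 2 * (a : Z k))).card := by
  rw [codeg_eq, ORB, countP_bind]
  simp only [Multiset.countP_nsmul, Multiset.countP_map]
  rfl

/-! ### sum/card helpers -/

lemma card_le_pair {s : Finset (Z k)} {c₁ c₂ : Z k} (h : ∀ i ∈ s, i = c₁ ∨ i = c₂) :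
    s.card ≤ 2 := by
  have hs : s ⊆ {c₁, c₂} := fun i hi => by rcases h i hi with rfl | rfl <;> simp
  refine (Finset.card_le_card hs).trans ?_
  refine (Finset.card_insert_le _ _).trans ?_
  simp

lemma card_le_single {s : Finset (Z k)} {c : Z k} (h : ∀ i ∈ s, i = c) : s.card ≤ 1 := by
  have hs : s ⊆ {c} := fun i hi => by rcases h i hi with rfl; simp
  simpa using Finset.card_le_card hs

lemma card_zero_of {s : Finset (Z k)} (h : ∀ i ∈ s, False) : s.card = 0 := by
  simp [Finset.eq_empty_of_forall_notMem fun i hi => h i hi]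

lemma sum_le_pair (w : Z k → ℕ) {s : Finset (Z k)} {c₁ c₂ : Z k}
    (h : ∀ i ∈ s, i = c₁ ∨ i = c₂) : ∑ i ∈ s, w i ≤ w c₁ + w c₂ := by
  have hs : s ⊆ {c₁, c₂} := fun i hi => by rcases h i hi with rfl | rfl <;> simp
  refine (Finset.sum_le_sum_of_subset hs).trans ?_
  by_cases hcc : c₁ = c₂
  · subst hcc; simp
  · rw [Finset.sum_pair hcc]

lemma sum_le_single (w : Z k → ℕ) {s : Finset (Z k)} {c : Z k}
    (h : ∀ i ∈ s, i = c) : ∑ i ∈ s, w i ≤ w c := by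
  have hs : s ⊆ {c} := fun i hi => by rcases h i hi with rfl; simp
  simpa using Finset.sum_le_sum_of_subset hs

lemma sum_zero_of (w : Z k → ℕ) {s : Finset (Z k)} (h : ∀ i ∈ s, False) : ∑ i ∈ s, w i = 0 := by
  rw [Finset.eq_empty_of_forall_notMem fun i hi => h i hi, Finset.sum_empty]

/-! ### master subset lemmas -/

lemma master_t3 {p q i a : Z k} (hpq : p ≠ q)
    (h : ({some p, some q} : Finset (W k)) ⊆ t3 i (i + a) (i + 2 * a)) :
    (q - p = a ∧ (i = p ∨ i = p - a)) ∨ (p - q = a ∧ (i = q ∨ i = q - a)) ∨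
      (q - p = 2 * a ∧ i = p) ∨ (p - q = 2 * a ∧ i = q) := by
  simp only [t3, Finset.insert_subset_iff, Finset.singleton_subset_iff, Finset.mem_insert,
    Finset.mem_singleton, Option.some.injEq] at h
  obtain ⟨h1 | h1 | h1, h2 | h2 | h2⟩ := h
  · exact absurd (h1.trans h2.symm) hpq
  · exact Or.inl ⟨by linear_combination h2 - h1, Or.inl (by linear_combination -h1)⟩
  · exact Or.inr (Or.inr (Or.inl ⟨by linear_combination h2 - h1, by linear_combination -h1⟩))
  · exact Or.inr (Or.inl ⟨by linear_combination h1 - h2, Or.inl (by linear_combination -h2)⟩)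
  · exact absurd (h1.trans h2.symm) hpq
  · exact Or.inl ⟨by linear_combination h2 - h1, Or.inr (by linear_combination -h1)⟩
  · exact Or.inr (Or.inr (Or.inr ⟨by linear_combination h1 - h2, by linear_combination -h2⟩))
  · exact Or.inr (Or.inl ⟨by linear_combination h1 - h2, Or.inr (by linear_combination -h2)⟩)
  · exact absurd (h1.trans h2.symm) hpq

lemma master_xa {p q i : Z k} (hpq : p ≠ q)
    (h : ({some p, some q} : Finset (W k)) ⊆ t3 (i - 1) i (i + 1)) :
    ((q - p = 1 ∨ p - q = 1) ∧ (i = p ∨ i = q)) ∨ (q - p = 2 ∧ i = p + 1) ∨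
      (p - q = 2 ∧ i = q + 1) := by
  simp only [t3, Finset.insert_subset_iff, Finset.singleton_subset_iff, Finset.mem_insert,
    Finset.mem_singleton, Option.some.injEq] at h
  obtain ⟨h1 | h1 | h1, h2 | h2 | h2⟩ := h
  · exact absurd (h1.trans h2.symm) hpq
  · exact Or.inl ⟨Or.inl (by linear_combination h2 - h1), Or.inr (by linear_combination -h2)⟩
  · exact Or.inr (Or.inl ⟨by linear_combination h2 - h1, by linear_combination -h1⟩)
  · exact Or.inl ⟨Or.inr (by linear_combination h1 - h2), Or.inl (by linear_combination -h1)⟩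
  · exact absurd (h1.trans h2.symm) hpq
  · exact Or.inl ⟨Or.inl (by linear_combination h2 - h1), Or.inl (by linear_combination -h1)⟩
  · exact Or.inr (Or.inr ⟨by linear_combination h1 - h2, by linear_combination -h2⟩)
  · exact Or.inl ⟨Or.inr (by linear_combination h1 - h2), Or.inr (by linear_combination -h2)⟩
  · exact absurd (h1.trans h2.symm) hpq

lemma master_ti {p q a b : Z k} (hpq : p ≠ q)
    (h : ({some p, some q} : Finset (W k)) ⊆ ti a b) :
    (p = a ∧ q = b) ∨ (p = b ∧ q = a) := by
  simp only [ti, Finset.insert_subset_iff, Finset.singleton_subset_iff, Finset.mem_insert,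
    Finset.mem_singleton, Option.some.injEq, reduceCtorEq, false_or] at h
  obtain ⟨h1 | h1, h2 | h2⟩ := h
  · exact absurd (h1.trans h2.symm) hpq
  · exact Or.inl ⟨h1, h2⟩
  · exact Or.inr ⟨h1, h2⟩
  · exact absurd (h1.trans h2.symm) hpq

lemma master_ti_inf {p a b : Z k}
    (h : ({none, some p} : Finset (W k)) ⊆ ti a b) : p = a ∨ p = b := by
  simp only [ti, Finset.insert_subset_iff, Finset.singleton_subset_iff, Finset.mem_insert,
    Finset.mem_singleton, Option.some.injEq, reduceCtorEq, false_or] at h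
  exact h.2

lemma not_inf_t3 {p i a b : Z k} :
    ¬ (({none, some p} : Finset (W k)) ⊆ t3 i a b) := by
  simp [t3, Finset.insert_subset_iff]

/-! ### ORB bounds -/

lemma cnt_le (hk : 1 ≤ k) {p q : Z k} (hpq : p ≠ q) {a : ℕ} (ha : a ∈ Finset.Icc 2 (3 * k)) :
    (Finset.univ.filter fun i : Z k =>
        ({some p, some q} : Finset (W k)) ⊆ t3 i (i + (a : Z k)) (i + 2 * (a : Z k))).card
      ≤ 2 * (if q - p = (a : Z k) ∨ p - q = (a : Z k) then 1 else 0)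
        + (if q - p = 2 * (a : Z k) ∨ p - q = 2 * (a : Z k) then 1 else 0) := by
  simp only [Finset.mem_Icc] at ha
  have ha1 : (a : Z k) ≠ 0 := ncast_ne_zero (by omega) (by omega) (by omega)
  have ha2 : (2 : Z k) * (a : Z k) ≠ 0 := by
    have h := ncast_ne_zero (k := k) (m := 2 * a) (by omega) (by omega) (by omega)
    intro hcc; exact h (by push_cast; linear_combination hcc)
  have ha3 : (3 : Z k) * (a : Z k) ≠ 0 := by
    have h := ncast_ne_zero (k := k) (m := 3 * a) (by omega) (by omega) (by omega)
    intro hcc; exact h (by push_cast; linear_combination hcc)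
  have ha4 : (4 : Z k) * (a : Z k) ≠ 0 := by
    have h := ncast_ne_zero (k := k) (m := 4 * a) (by omega) (by omega) (by omega)
    intro hcc; exact h (by push_cast; linear_combination hcc)
  by_cases H1 : q - p = (a : Z k) ∨ p - q = (a : Z k)
  · rw [if_pos H1]
    refine le_trans ?_ (Nat.le_add_right _ _)
    rcases H1 with H | H
    · refine card_le_pair (c₁ := p) (c₂ := p - (a : Z k)) fun i hi => ?_
      rw [Finset.mem_filter] at hi
      rcases master_t3 hpq hi.2 with ⟨_, hi'⟩ | ⟨hd, _⟩ | ⟨hd, _⟩ | ⟨hd, _⟩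
      · exact hi'
      · exact absurd (show (2 : Z k) * (a : Z k) = 0 by linear_combination -H - hd) ha2
      · exact absurd (show (a : Z k) = 0 by linear_combination H - hd) ha1
      · exact absurd (show (3 : Z k) * (a : Z k) = 0 by linear_combination -H - hd) ha3
    · refine card_le_pair (c₁ := q) (c₂ := q - (a : Z k)) fun i hi => ?_
      rw [Finset.mem_filter] at hi
      rcases master_t3 hpq hi.2 with ⟨hd, _⟩ | ⟨_, hi'⟩ | ⟨hd, _⟩ | ⟨hd, _⟩
      · exact absurd (show (2 : Z k) * (a : Z k) = 0 by linear_combination -H - hd) ha2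
      · exact hi'
      · exact absurd (show (3 : Z k) * (a : Z k) = 0 by linear_combination -H - hd) ha3
      · exact absurd (show (a : Z k) = 0 by linear_combination H - hd) ha1
  · rw [if_neg H1]
    push_neg at H1
    obtain ⟨H1a, H1b⟩ := H1
    by_cases H2 : q - p = 2 * (a : Z k) ∨ p - q = 2 * (a : Z k)
    · rw [if_pos H2, mul_zero, zero_add]
      rcases H2 with H | H
      · refine card_le_single (c := p) fun i hi => ?_
        rw [Finset.mem_filter] at hi
        rcases master_t3 hpq hi.2 with ⟨hd, _⟩ | ⟨hd, _⟩ | ⟨_, hi'⟩ | ⟨hd, _⟩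
        · exact absurd hd H1a
        · exact absurd hd H1b
        · exact hi'
        · exact absurd (show (4 : Z k) * (a : Z k) = 0 by linear_combination -H - hd) ha4
      · refine card_le_single (c := q) fun i hi => ?_
        rw [Finset.mem_filter] at hi
        rcases master_t3 hpq hi.2 with ⟨hd, _⟩ | ⟨hd, _⟩ | ⟨hd, _⟩ | ⟨_, hi'⟩
        · exact absurd hd H1a
        · exact absurd hd H1b
        · exact absurd (show (4 : Z k) * (a : Z k) = 0 by linear_combination -H - hd) ha4
        · exact hi'
    · rw [if_neg H2, mul_zero, zero_add]
      push_neg at H2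
      refine le_of_eq (card_zero_of fun i hi => ?_)
      rw [Finset.mem_filter] at hi
      rcases master_t3 hpq hi.2 with ⟨hd, _⟩ | ⟨hd, _⟩ | ⟨hd, _⟩ | ⟨hd, _⟩
      · exact H1a hd
      · exact H1b hd
      · exact H2.1 hd
      · exact H2.2 hd

lemma cardF1_le (p q : Z k) :
    ((Finset.Icc 2 (3 * k)).filter fun a : ℕ =>
      q - p = (a : Z k) ∨ p - q = (a : Z k)).card ≤ 1 := by
  rw [Finset.card_le_one]
  intro a ha b hb
  simp only [Finset.mem_filter, Finset.mem_Icc] at ha hb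
  obtain ⟨⟨ha2, ha3⟩, hA⟩ := ha
  obtain ⟨⟨hb2, hb3⟩, hB⟩ := hb
  rcases hA with hA | hA <;> rcases hB with hB | hB
  · exact cast_inj_lt (by omega) (by omega) (hA.symm.trans hB)
  · exact absurd (show ((a + b : ℕ) : Z k) = 0 by push_cast; linear_combination -hA - hB)
      (ncast_ne_zero (by omega) (by omega) (by omega))
  · exact absurd (show ((a + b : ℕ) : Z k) = 0 by push_cast; linear_combination -hA - hB)
      (ncast_ne_zero (by omega) (by omega) (by omega))
  · exact cast_inj_lt (by omega) (by omega) (hA.symm.trans hB)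

lemma cardF2_le (p q : Z k) :
    ((Finset.Icc 2 (3 * k)).filter fun a : ℕ =>
      q - p = 2 * (a : Z k) ∨ p - q = 2 * (a : Z k)).card ≤ 1 := by
  rw [Finset.card_le_one]
  intro a ha b hb
  simp only [Finset.mem_filter, Finset.mem_Icc] at ha hb
  obtain ⟨⟨ha2, ha3⟩, hA⟩ := ha
  obtain ⟨⟨hb2, hb3⟩, hB⟩ := hb
  rcases hA with hA | hA <;> rcases hB with hB | hB
  · have := cast_inj_lt (k := k) (a := 2 * a) (b := 2 * b) (by omega) (by omega)
      (by push_cast; linear_combination hB - hA)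
    omega
  · exact absurd (show ((2 * a + 2 * b : ℕ) : Z k) = 0 by push_cast; linear_combination -hA - hB)
      (ncast_ne_zero (by omega) (by omega) (by omega))
  · exact absurd (show ((2 * a + 2 * b : ℕ) : Z k) = 0 by push_cast; linear_combination -hA - hB)
      (ncast_ne_zero (by omega) (by omega) (by omega))
  · have := cast_inj_lt (k := k) (a := 2 * a) (b := 2 * b) (by omega) (by omega)
      (by push_cast; linear_combination hB - hA)
    omega

lemma cardF1_zero_one (p : Z k) :
    ((Finset.Icc 2 (3 * k)).filter fun a : ℕ =>
      (p + 1) - p = (a : Z k) ∨ p - (p + 1) = (a : Z k)).card = 0 := by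
  rw [Finset.card_eq_zero, Finset.filter_eq_empty_iff]
  intro a ha
  simp only [Finset.mem_Icc] at ha
  rintro (h | h)
  · have h' : ((a : ℕ) : Z k) = ((1 : ℕ) : Z k) := by push_cast; linear_combination -h
    have := cast_inj_lt (by omega) (by omega) h'
    omega
  · exact absurd (show ((a + 1 : ℕ) : Z k) = 0 by push_cast; linear_combination -h)
      (ncast_ne_zero (by omega) (by omega) (by omega))

lemma cardF2_zero_two (p : Z k) :
    ((Finset.Icc 2 (3 * k)).filter fun a : ℕ =>
      (p + 2) - p = 2 * (a : Z k) ∨ p - (p + 2) = 2 * (a : Z k)).card = 0 := by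
  rw [Finset.card_eq_zero, Finset.filter_eq_empty_iff]
  intro a ha
  simp only [Finset.mem_Icc] at ha
  rintro (h | h)
  · have h' : ((2 * a : ℕ) : Z k) = ((2 : ℕ) : Z k) := by push_cast; linear_combination -h
    have := cast_inj_lt (by omega) (by omega) h'
    omega
  · exact absurd (show ((2 * a + 2 : ℕ) : Z k) = 0 by push_cast; linear_combination -h)
      (ncast_ne_zero (by omega) (by omega) (by omega))

lemma orb_bound (hk : 1 ≤ k) {p q : Z k} (hpq : p ≠ q) :
    codegPair (ORB k) {some p, some q} ≤
      4 * ((Finset.Icc 2 (3 * k)).filter fun a : ℕ =>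
        q - p = (a : Z k) ∨ p - q = (a : Z k)).card
      + 2 * ((Finset.Icc 2 (3 * k)).filter fun a : ℕ =>
        q - p = 2 * (a : Z k) ∨ p - q = 2 * (a : Z k)).card := by
  rw [codeg_ORB]
  have key : ∀ a ∈ Finset.Icc 2 (3 * k),
      2 * (Finset.univ.filter fun i : Z k =>
        ({some p, some q} : Finset (W k)) ⊆ t3 i (i + (a : Z k)) (i + 2 * (a : Z k))).card ≤
      4 * (if q - p = (a : Z k) ∨ p - q = (a : Z k) then 1 else 0)
        + 2 * (if q - p = 2 * (a : Z k) ∨ p - q = 2 * (a : Z k) then 1 else 0) :=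
    fun a ha => by have := cnt_le hk hpq ha; omega
  refine le_trans (Finset.sum_le_sum key) ?_
  rw [Finset.sum_add_distrib, ← Finset.mul_sum, ← Finset.mul_sum,
    ← Finset.card_filter, ← Finset.card_filter]

lemma orb_le (hk : 1 ≤ k) {p q : Z k} (hpq : p ≠ q) :
    codegPair (ORB k) {some p, some q} ≤ 6 := by
  have h1 := cardF1_le p q
  have h2 := cardF2_le p q
  have := orb_bound hk hpq
  omega

lemma orb_le_one (hk : 1 ≤ k) (p : Z k) :
    codegPair (ORB k) {some p, some (p + 1)} ≤ 2 := by
  have hpq : p ≠ p + 1 := fun h => one_nz hk (by linear_combination -h)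
  have h1 := cardF1_zero_one p
  have h2 := cardF2_le p (p + 1)
  have := orb_bound hk hpq
  omega

lemma orb_le_two (hk : 1 ≤ k) (p : Z k) :
    codegPair (ORB k) {some p, some (p + 2)} ≤ 4 := by
  have hpq : p ≠ p + 2 := fun h => two_nz hk (by linear_combination -h)
  have h1 := cardF1_le p (p + 2)
  have h2 := cardF2_zero_two p
  have := orb_bound hk hpq
  omega

lemma orb_inf (p : Z k) : codegPair (ORB k) {none, some p} = 0 := by
  rw [codeg_ORB]
  refine Finset.sum_eq_zero fun a _ => ?_
  rw [card_zero_of fun i hi => not_inf_t3 (Finset.mem_filter.mp hi).2, Nat.mul_zero]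

/-! ### S1, XA, YB, ZC bounds -/

lemma s1_inf (p : Z k) : codegPair (S1 k) {none, some p} ≤ 2 := by
  rw [codeg_S1]
  refine card_le_pair (c₁ := p) (c₂ := p - 1) fun i hi => ?_
  rcases master_ti_inf (Finset.mem_filter.mp hi).2 with h | h
  · exact Or.inl h.symm
  · exact Or.inr (by linear_combination -h)

lemma s1_one (hk : 1 ≤ k) (p : Z k) : codegPair (S1 k) {some p, some (p + 1)} ≤ 1 := by
  have hpq : p ≠ p + 1 := fun h => one_nz hk (by linear_combination -h)
  rw [codeg_S1]
  refine card_le_single (c := p) fun i hi => ?_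
  rcases master_ti hpq (Finset.mem_filter.mp hi).2 with ⟨h1, _⟩ | ⟨h1, h2⟩
  · exact h1.symm
  · exact absurd (show (2 : Z k) = 0 by linear_combination h2 - h1) (two_nz hk)

lemma s1_two (hk : 1 ≤ k) (p : Z k) : codegPair (S1 k) {some p, some (p + 2)} = 0 := by
  have hpq : p ≠ p + 2 := fun h => two_nz hk (by linear_combination -h)
  rw [codeg_S1]
  refine card_zero_of fun i hi => ?_
  rcases master_ti hpq (Finset.mem_filter.mp hi).2 with ⟨h1, h2⟩ | ⟨h1, h2⟩
  · exact one_nz hk (by linear_combination h2 - h1)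
  · exact three_nz hk (by linear_combination h2 - h1)

lemma s1_gen (p q : Z k) (hpq : p ≠ q) (hx1 : q ≠ p + 1) (hx2 : p ≠ q + 1) :
    codegPair (S1 k) {some p, some q} = 0 := by
  rw [codeg_S1]
  refine card_zero_of fun i hi => ?_
  rcases master_ti hpq (Finset.mem_filter.mp hi).2 with ⟨h1, h2⟩ | ⟨h1, h2⟩
  · exact hx1 (by linear_combination h2 - h1)
  · exact hx2 (by linear_combination h1 - h2)

lemma xa_inf (p : Z k) : codegPair (XA k) {none, some p} = 0 := by
  rw [XA, codeg_wsum]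
  exact sum_zero_of _ fun i hi => not_inf_t3 (Finset.mem_filter.mp hi).2

lemma xa_one (hk : 1 ≤ k) (p : Z k) :
    codegPair (XA k) {some p, some (p + 1)} ≤ xw p + xw (p + 1) := by
  have hpq : p ≠ p + 1 := fun h => one_nz hk (by linear_combination -h)
  rw [XA, codeg_wsum]
  refine sum_le_pair _ fun i hi => ?_
  rcases master_xa hpq (Finset.mem_filter.mp hi).2 with ⟨_, hi'⟩ | ⟨hd, _⟩ | ⟨hd, _⟩
  · exact hi'
  · exact absurd (show (1 : Z k) = 0 by linear_combination -hd) (one_nz hk)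
  · exact absurd (show (3 : Z k) = 0 by linear_combination -hd) (three_nz hk)

lemma xa_two (hk : 1 ≤ k) (p : Z k) :
    codegPair (XA k) {some p, some (p + 2)} ≤ xw (p + 1) := by
  have hpq : p ≠ p + 2 := fun h => two_nz hk (by linear_combination -h)
  rw [XA, codeg_wsum]
  refine sum_le_single _ fun i hi => ?_
  rcases master_xa hpq (Finset.mem_filter.mp hi).2 with ⟨hd | hd, _⟩ | ⟨_, hi'⟩ | ⟨hd, _⟩
  · exact absurd (show (1 : Z k) = 0 by linear_combination hd) (one_nz hk)
  · exact absurd (show (3 : Z k) = 0 by linear_combination -hd) (three_nz hk)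
  · exact hi'
  · exact absurd (show (4 : Z k) = 0 by linear_combination -hd) (four_nz hk)

lemma xa_gen (p q : Z k) (hpq : p ≠ q) (hx1 : q ≠ p + 1) (hx2 : p ≠ q + 1)
    (hx3 : q ≠ p + 2) (hx4 : p ≠ q + 2) :
    codegPair (XA k) {some p, some q} = 0 := by
  rw [XA, codeg_wsum]
  refine sum_zero_of _ fun i hi => ?_
  rcases master_xa hpq (Finset.mem_filter.mp hi).2 with ⟨hd | hd, _⟩ | ⟨hd, _⟩ | ⟨hd, _⟩
  · exact hx1 (by linear_combination hd)
  · exact hx2 (by linear_combination hd)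
  · exact hx3 (by linear_combination hd)
  · exact hx4 (by linear_combination hd)

lemma yb_inf (p : Z k) : codegPair (YB k) {none, some p} ≤ yw p + yw (p - 1) := by
  rw [YB, codeg_wsum]
  refine sum_le_pair _ fun i hi => ?_
  rcases master_ti_inf (Finset.mem_filter.mp hi).2 with h | h
  · exact Or.inl h.symm
  · exact Or.inr (by linear_combination -h)

lemma yb_one (hk : 1 ≤ k) (p : Z k) :
    codegPair (YB k) {some p, some (p + 1)} ≤ yw p := by
  have hpq : p ≠ p + 1 := fun h => one_nz hk (by linear_combination -h)
  rw [YB, codeg_wsum]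
  refine sum_le_single _ fun i hi => ?_
  rcases master_ti hpq (Finset.mem_filter.mp hi).2 with ⟨h1, _⟩ | ⟨h1, h2⟩
  · exact h1.symm
  · exact absurd (show (2 : Z k) = 0 by linear_combination h2 - h1) (two_nz hk)

lemma yb_two (hk : 1 ≤ k) (p : Z k) : codegPair (YB k) {some p, some (p + 2)} = 0 := by
  have hpq : p ≠ p + 2 := fun h => two_nz hk (by linear_combination -h)
  rw [YB, codeg_wsum]
  refine sum_zero_of _ fun i hi => ?_
  rcases master_ti hpq (Finset.mem_filter.mp hi).2 with ⟨h1, h2⟩ | ⟨h1, h2⟩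
  · exact one_nz hk (by linear_combination h2 - h1)
  · exact three_nz hk (by linear_combination h2 - h1)

lemma yb_gen (p q : Z k) (hpq : p ≠ q) (hx1 : q ≠ p + 1) (hx2 : p ≠ q + 1) :
    codegPair (YB k) {some p, some q} = 0 := by
  rw [YB, codeg_wsum]
  refine sum_zero_of _ fun i hi => ?_
  rcases master_ti hpq (Finset.mem_filter.mp hi).2 with ⟨h1, h2⟩ | ⟨h1, h2⟩
  · exact hx1 (by linear_combination h2 - h1)
  · exact hx2 (by linear_combination h1 - h2)

lemma zc_inf (p : Z k) : codegPair (ZC k) {none, some p} ≤ zw p + zw (p - 2) := by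
  rw [ZC, codeg_wsum]
  refine sum_le_pair _ fun i hi => ?_
  rcases master_ti_inf (Finset.mem_filter.mp hi).2 with h | h
  · exact Or.inl h.symm
  · exact Or.inr (by linear_combination -h)

lemma zc_one (hk : 1 ≤ k) (p : Z k) : codegPair (ZC k) {some p, some (p + 1)} = 0 := by
  have hpq : p ≠ p + 1 := fun h => one_nz hk (by linear_combination -h)
  rw [ZC, codeg_wsum]
  refine sum_zero_of _ fun i hi => ?_
  rcases master_ti hpq (Finset.mem_filter.mp hi).2 with ⟨h1, h2⟩ | ⟨h1, h2⟩
  · exact one_nz hk (by linear_combination h1 - h2)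
  · exact three_nz hk (by linear_combination h2 - h1)

lemma zc_two (hk : 1 ≤ k) (p : Z k) :
    codegPair (ZC k) {some p, some (p + 2)} ≤ zw p := by
  have hpq : p ≠ p + 2 := fun h => two_nz hk (by linear_combination -h)
  rw [ZC, codeg_wsum]
  refine sum_le_single _ fun i hi => ?_
  rcases master_ti hpq (Finset.mem_filter.mp hi).2 with ⟨h1, _⟩ | ⟨h1, h2⟩
  · exact h1.symm
  · exact absurd (show (4 : Z k) = 0 by linear_combination h2 - h1) (four_nz hk)

lemma zc_gen (p q : Z k) (hpq : p ≠ q) (hx3 : q ≠ p + 2) (hx4 : p ≠ q + 2) :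
    codegPair (ZC k) {some p, some q} = 0 := by
  rw [ZC, codeg_wsum]
  refine sum_zero_of _ fun i hi => ?_
  rcases master_ti hpq (Finset.mem_filter.mp hi).2 with ⟨h1, h2⟩ | ⟨h1, h2⟩
  · exact hx3 (by linear_combination h2 - h1)
  · exact hx4 (by linear_combination h1 - h2)

/-! ### window lemmas for xw -/

lemma xw_le (i : Z k) : xw i ≤ 1 := by rw [xw]; split <;> omega

lemma val_one' (hk : 1 ≤ k) : (1 : Z k).val = 1 := by
  have : ((1 : ℕ) : Z k).val = 1 := ZMod.val_natCast_of_lt (by show 1 < 6 * k + 1; omega)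
  simpa using this

lemma val_add_one (hk : 1 ≤ k) (i : Z k) :
    (i + 1).val = if i.val = 6 * k then 0 else i.val + 1 := by
  have hv : i.val < 6 * k + 1 := ZMod.val_lt i
  rw [ZMod.val_add, val_one' hk]
  split
  · next h => rw [h]; exact Nat.mod_self _
  · next h => exact Nat.mod_eq_of_lt (by show ZMod.val i + 1 + 1 ≤ 6 * k + 1; omega)

lemma neg_one_cast (hk : 1 ≤ k) : ((6 * k : ℕ) : Z k) = -1 := by
  have h : ((6 * k + 1 : ℕ) : Z k) = 0 := ZMod.natCast_self _
  push_cast at h ⊢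
  linear_combination h

lemma val_neg_one (hk : 1 ≤ k) : (-1 : Z k).val = 6 * k := by
  rw [← neg_one_cast hk]
  exact ZMod.val_natCast_of_lt (by show 6 * k < 6 * k + 1; omega)

lemma window_ge (hk : 1 ≤ k) (i : Z k) (hne : i.val ≠ 6 * k) :
    2 ≤ xw i + xw (i + 1) + xw (i + 2) := by
  have hv : i.val < 6 * k + 1 := ZMod.val_lt i
  have h1 : (i + 1).val = i.val + 1 := by rw [val_add_one hk i, if_neg hne]
  have e2 : i + 2 = (i + 1) + 1 := by ring
  by_cases h6 : i.val + 1 = 6 * k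
  · have h2 : (i + 2).val = 0 := by
      rw [e2, val_add_one hk (i + 1), h1, if_pos h6]
    rw [xw, xw, xw, h1, h2]
    norm_num
    split_ifs <;> omega
  · have h2 : (i + 2).val = i.val + 2 := by
      rw [e2, val_add_one hk (i + 1), h1, if_neg h6]
    rw [xw, xw, xw, h1, h2]
    split_ifs <;> omega

lemma xw_zero (hk : 1 ≤ k) : xw (0 : Z k) = 1 := by
  rw [xw, ZMod.val_zero]; norm_num

lemma xw_one (hk : 1 ≤ k) : xw ((0 : Z k) + 1) = 1 := by
  rw [xw, zero_add, val_one' hk]; norm_num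

lemma xw_neg_one (hk : 1 ≤ k) : xw ((0 : Z k) - 1) = 1 := by
  have : (0 : Z k) - 1 = -1 := by ring
  rw [xw, this, val_neg_one hk]
  have : 6 * k % 3 = 0 := by omega
  rw [this]
  simp

/-! ### assembled pair bounds for H0 -/

lemma h0_inf_le' (p : Z k) :
    codegPair (H0 k) {none, some p} ≤ 2 + (yw p + yw (p - 1)) + (zw p + zw (p - 2)) := by
  rw [codeg_H0, orb_inf, xa_inf]
  have h1 := s1_inf (k := k) p
  have h2 := yb_inf (k := k) p
  have h3 := zc_inf (k := k) p
  omega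

lemma h0_inf_zero (hk : 1 ≤ k) : codegPair (H0 k) {none, some (0 : Z k)} ≤ 5 := by
  refine (h0_inf_le' 0).trans ?_
  have e1 : (0 : Z k) - 1 + 1 = 0 := by ring
  have e2 : (0 : Z k) - 2 + 1 = 0 - 1 := by ring
  rw [yw, yw, zw, zw, e1, e2, xw_zero hk, xw_one hk, xw_neg_one hk]
  omega

lemma h0_inf_le (hk : 1 ≤ k) (p : Z k) : codegPair (H0 k) {none, some p} ≤ 6 := by
  by_cases hp0 : p = 0
  · subst hp0; exact (h0_inf_zero hk).trans (by omega)
  refine (h0_inf_le' p).trans ?_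
  have hne : (p - 1).val ≠ 6 * k := by
    intro h
    apply hp0
    have : p - 1 = ((6 * k : ℕ) : Z k) := by
      have := ZMod.val_natCast_of_lt (a := 6 * k) (n := uu k) (by show 6 * k < 6 * k + 1; omega)
      exact ZMod.val_injective _ (by rw [h, this])
    rw [neg_one_cast hk] at this
    linear_combination this
  have hw := window_ge hk (p - 1) hne
  rw [show p - 1 + 1 = p by ring, show p - 1 + 2 = p + 1 by ring] at hw
  have e1 : (p - 1) + 1 = p := by ring
  have e2 : (p - 2) + 1 = p - 1 := by ring
  rw [yw, yw, zw, zw, e1, e2]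
  have := xw_le (p - 1)
  have := xw_le p
  have := xw_le (p + 1)
  omega

lemma h0_one (hk : 1 ≤ k) (p : Z k) : codegPair (H0 k) {some p, some (p + 1)} ≤ 5 := by
  rw [codeg_H0, zc_one hk]
  have h1 := orb_le_one hk p
  have h2 := s1_one hk p
  have h3 := xa_one hk p
  have h4 := yb_one hk p
  have hy : yw p = 2 - xw p - xw (p + 1) := rfl
  have := xw_le p
  have := xw_le (p + 1)
  omega

lemma h0_two (hk : 1 ≤ k) (p : Z k) : codegPair (H0 k) {some p, some (p + 2)} ≤ 6 := by
  rw [codeg_H0, s1_two hk, yb_two hk]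
  have h1 := orb_le_two hk p
  have h3 := xa_two hk p
  have h5 := zc_two hk p
  have hz : zw p = 2 - xw (p + 1) := rfl
  have := xw_le (p + 1)
  omega

lemma h0_gen (hk : 1 ≤ k) (p q : Z k) (hpq : p ≠ q) (hx1 : q ≠ p + 1) (hx2 : p ≠ q + 1)
    (hx3 : q ≠ p + 2) (hx4 : p ≠ q + 2) : codegPair (H0 k) {some p, some q} ≤ 6 := by
  rw [codeg_H0, s1_gen p q hpq hx1 hx2, xa_gen p q hpq hx1 hx2 hx3 hx4,
    yb_gen p q hpq hx1 hx2, zc_gen p q hpq hx3 hx4]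
  have := orb_le hk hpq
  omega

lemma h0_zz (hk : 1 ≤ k) (p q : Z k) (hpq : p ≠ q) :
    codegPair (H0 k) {some p, some q} ≤ 6 := by
  by_cases h1 : q = p + 1
  · subst h1; exact (h0_one hk p).trans (by omega)
  by_cases h2 : p = q + 1
  · rw [Finset.pair_comm]; subst h2; exact (h0_one hk q).trans (by omega)
  by_cases h3 : q = p + 2
  · subst h3; exact h0_two hk p
  by_cases h4 : p = q + 2
  · rw [Finset.pair_comm]; subst h4; exact h0_two hk q
  exact h0_gen hk p q hpq h1 h2 h3 h4

/-! ### cardinality computations -/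

lemma sum_val_transfer (g : ℕ → ℕ) :
    ∑ i : Z k, g i.val = ∑ j ∈ Finset.range (6 * k + 1), g j := by
  refine Finset.sum_nbij' (fun i : Z k => i.val) (fun j : ℕ => (j : Z k)) ?_ ?_ ?_ ?_ ?_
  · intro a _; exact Finset.mem_range.mpr (ZMod.val_lt a)
  · intro a _; exact Finset.mem_univ _
  · intro a _; exact ZMod.natCast_zmod_val a
  · intro j hj; exact ZMod.val_natCast_of_lt (Finset.mem_range.mp hj)
  · intro a _; rfl

lemma sum_range_mod3 (m : ℕ) :
    ∑ j ∈ Finset.range (3 * m + 1), (if j % 3 = 2 then 0 else 1) = 2 * m + 1 := by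
  induction m with
  | zero => simp
  | succ n ih =>
    have h : 3 * (n + 1) + 1 = (3 * n + 1) + 1 + 1 + 1 := by ring
    rw [h, Finset.sum_range_succ, Finset.sum_range_succ, Finset.sum_range_succ, ih]
    have e1 : (3 * n + 1) % 3 = 1 := by omega
    have e2 : (3 * n + 1 + 1) % 3 = 2 := by omega
    have e3 : (3 * n + 1 + 1 + 1) % 3 = 0 := by omega
    rw [e1, e2, e3]
    norm_num
    ring

lemma sum_xw (hk : 1 ≤ k) : ∑ i : Z k, xw i = 4 * k + 1 := by
  have h : ∑ i : Z k, xw i = ∑ j ∈ Finset.range (6 * k + 1), (if j % 3 = 2 then 0 else 1) :=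
    sum_val_transfer (fun j => if j % 3 = 2 then 0 else 1)
  rw [h, show 6 * k + 1 = 3 * (2 * k) + 1 by ring, sum_range_mod3]
  omega

lemma sum_shift (c : Z k) (w : Z k → ℕ) : ∑ i : Z k, w (i + c) = ∑ i : Z k, w i :=
  Fintype.sum_equiv (Equiv.addRight c) _ _ (fun _ => rfl)

lemma card_Z : Fintype.card (Z k) = 6 * k + 1 := ZMod.card _

lemma sum_yw (hk : 1 ≤ k) : ∑ i : Z k, yw i = 4 * k := by
  have hpt : ∀ i : Z k, yw i + (xw i + xw (i + 1)) = 2 := by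
    intro i
    have := xw_le i; have := xw_le (i + 1)
    rw [yw]; omega
  have hsum : ∑ i : Z k, (yw i + (xw i + xw (i + 1))) = (6 * k + 1) * 2 := by
    rw [Finset.sum_congr rfl fun i _ => hpt i, Finset.sum_const, Finset.card_univ, card_Z,
      smul_eq_mul]
  rw [Finset.sum_add_distrib, Finset.sum_add_distrib] at hsum
  have h1 := sum_xw (k := k) hk
  have h2 : ∑ i : Z k, xw (i + 1) = 4 * k + 1 := by rw [sum_shift 1 xw]; exact h1
  omega

lemma sum_zw (hk : 1 ≤ k) : ∑ i : Z k, zw i = 8 * k + 1 := by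
  have hpt : ∀ i : Z k, zw i + xw (i + 1) = 2 := by
    intro i; have := xw_le (i + 1); rw [zw]; omega
  have hsum : ∑ i : Z k, (zw i + xw (i + 1)) = (6 * k + 1) * 2 := by
    rw [Finset.sum_congr rfl fun i _ => hpt i, Finset.sum_const, Finset.card_univ, card_Z,
      smul_eq_mul]
  rw [Finset.sum_add_distrib] at hsum
  have h2 : ∑ i : Z k, xw (i + 1) = 4 * k + 1 := by rw [sum_shift 1 xw]; exact sum_xw hk
  omega

lemma card_univ_val : Multiset.card (Finset.univ.val : Multiset (Z k)) = 6 * k + 1 := by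
  have : (Finset.univ : Finset (Z k)).card = 6 * k + 1 := by
    rw [Finset.card_univ]; exact card_Z
  exact this

lemma card_bind_sum {α : Type*} (s : Finset α) (f : α → Multiset (Finset (W k))) :
    Multiset.card (s.val.bind f) = ∑ a ∈ s, Multiset.card (f a) := by
  rw [Multiset.card_bind]; rfl

lemma card_ORB : Multiset.card (ORB k) = (3 * k + 1 - 2) * (2 * (6 * k + 1)) := by
  rw [ORB, card_bind_sum]
  rw [Finset.sum_congr rfl (fun a _ => by
    rw [Multiset.card_nsmul, Multiset.card_map, card_univ_val])]
  rw [Finset.sum_const, Nat.card_Icc, smul_eq_mul]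

lemma card_S1 : Multiset.card (S1 k) = 6 * k + 1 := by
  rw [S1, Multiset.card_map, card_univ_val]

lemma card_wpart (w : Z k → ℕ) (f : Z k → Finset (W k)) :
    Multiset.card (Finset.univ.val.bind fun i : Z k => w i • ({f i} : Multiset _))
      = ∑ i : Z k, w i := by
  rw [card_bind_sum]
  exact Finset.sum_congr rfl fun i _ => by
    rw [Multiset.card_nsmul, Multiset.card_singleton, mul_one]

lemma card_H0 (hk : 1 ≤ k) : Multiset.card (H0 k) = 36 * (k * k) + 16 * k + 1 := by
  have h1 : Multiset.card (H0 k) = Multiset.card (ORB k) + Multiset.card (S1 k)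
      + Multiset.card (XA k) + Multiset.card (YB k) + Multiset.card (ZC k) := by
    rw [H0]; simp [Multiset.card_add]
  rw [h1, card_ORB, card_S1, XA, card_wpart, YB, card_wpart, ZC, card_wpart,
    sum_xw hk, sum_yw hk, sum_zw hk]
  obtain ⟨j, rfl⟩ : ∃ j, k = j + 1 := ⟨k - 1, by omega⟩
  have e : 3 * (j + 1) + 1 - 2 = 3 * j + 2 := by omega
  rw [e]
  ring

/-! ### all triples have size 3 -/

lemma card_t3 {a b c : Z k} (h1 : a ≠ b) (h2 : a ≠ c) (h3 : b ≠ c) : (t3 a b c).card = 3 := by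
  rw [t3, Finset.card_insert_of_notMem (by simp [h1, h2]),
    Finset.card_insert_of_notMem (by simp [h3]), Finset.card_singleton]

lemma card_ti {a b : Z k} (h : a ≠ b) : (ti a b).card = 3 := by
  rw [ti, Finset.card_insert_of_notMem (by simp),
    Finset.card_insert_of_notMem (by simp [h]), Finset.card_singleton]

lemma card3_H0 (hk : 1 ≤ k) : ∀ t ∈ H0 k, t.card = 3 := by
  intro t ht
  rw [H0] at ht
  simp only [Multiset.mem_add] at ht
  rcases ht with ((((ht | ht) | ht) | ht) | ht)
  · rw [ORB, Multiset.mem_bind] at ht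
    obtain ⟨a, ha, ht⟩ := ht
    rw [Multiset.mem_nsmul] at ht
    obtain ⟨i, _, rfl⟩ := Multiset.mem_map.mp ht.2
    rw [Finset.mem_val, Finset.mem_Icc] at ha
    have ha1 : (a : Z k) ≠ 0 := ncast_ne_zero (by omega) (by omega) (by omega)
    have ha2 : (2 : Z k) * (a : Z k) ≠ 0 := by
      have h := ncast_ne_zero (k := k) (m := 2 * a) (by omega) (by omega) (by omega)
      intro hcc; exact h (by push_cast; linear_combination hcc)
    exact card_t3 (fun h => ha1 (by linear_combination -h))
      (fun h => ha2 (by linear_combination -h)) (fun h => ha1 (by linear_combination -h))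
  · obtain ⟨i, _, rfl⟩ := Multiset.mem_map.mp ht
    exact card_ti fun h => one_nz hk (by linear_combination -h)
  · rw [XA, Multiset.mem_bind] at ht
    obtain ⟨i, _, ht⟩ := ht
    rw [Multiset.mem_nsmul, Multiset.mem_singleton] at ht
    rw [ht.2]
    exact card_t3 (fun h => one_nz hk (by linear_combination -h))
      (fun h => two_nz hk (by linear_combination -h))
      (fun h => one_nz hk (by linear_combination -h))
  · rw [YB, Multiset.mem_bind] at ht
    obtain ⟨i, _, ht⟩ := ht
    rw [Multiset.mem_nsmul, Multiset.mem_singleton] at ht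
    rw [ht.2]
    exact card_ti fun h => one_nz hk (by linear_combination -h)
  · rw [ZC, Multiset.mem_bind] at ht
    obtain ⟨i, _, ht⟩ := ht
    rw [Multiset.mem_nsmul, Multiset.mem_singleton] at ht
    rw [ht.2]
    exact card_ti fun h => two_nz hk (by linear_combination -h)

/-! ### the matching in the leave -/

def Qm (k : ℕ) : Finset (Finset (W k)) :=
  insert {none, some 0} ((Finset.range (3 * k)).image fun j =>
    ({some ((2 * j + 1 : ℕ) : Z k), some ((2 * j + 2 : ℕ) : Z k)} : Finset (W k)))

lemma mem_Qm_elim {s : Finset (W k)} (hs : s ∈ Qm k) :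
    s = {none, some 0} ∨ ∃ j, j < 3 * k ∧
      s = {some ((2 * j + 1 : ℕ) : Z k), some ((2 * j + 2 : ℕ) : Z k)} := by
  rw [Qm, Finset.mem_insert] at hs
  rcases hs with h | h
  · exact Or.inl h
  · right
    obtain ⟨j, hj, hEq⟩ := Finset.mem_image.mp h
    exact ⟨j, Finset.mem_range.mp hj, hEq.symm⟩

lemma card_Qm (hk : 1 ≤ k) : (Qm k).card = 3 * k + 1 := by
  rw [Qm, Finset.card_insert_of_notMem, Finset.card_image_of_injOn, Finset.card_range]
  · intro j hj j' hj' hEq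
    rw [Finset.mem_coe, Finset.mem_range] at hj hj'
    simp only at hEq
    have h1 : (some ((2 * j + 1 : ℕ) : Z k) : W k)
        ∈ ({some ((2 * j' + 1 : ℕ) : Z k), some ((2 * j' + 2 : ℕ) : Z k)} : Finset (W k)) := by
      rw [← hEq]; simp
    simp only [Finset.mem_insert, Finset.mem_singleton, Option.some.injEq] at h1
    rcases h1 with h1 | h1
    · have := cast_inj_lt (by omega) (by omega) h1; omega
    · have := cast_inj_lt (by omega) (by omega) h1; omega
  · intro h
    obtain ⟨j, _, hEq⟩ := Finset.mem_image.mp h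
    have : (none : W k) ∈ ({some ((2 * j + 1 : ℕ) : Z k), some ((2 * j + 2 : ℕ) : Z k)}
        : Finset (W k)) := by rw [hEq]; simp
    simp at this

lemma card2_Qm (hk : 1 ≤ k) : ∀ s ∈ Qm k, s.card = 2 := by
  intro s hs
  rcases mem_Qm_elim hs with rfl | ⟨j, hj, rfl⟩
  · exact Finset.card_pair (by simp)
  · refine Finset.card_pair ?_
    simp only [ne_eq, Option.some.injEq]
    intro h
    have := cast_inj_lt (by omega) (by omega) h
    omega

lemma disj_base_pair (hk : 1 ≤ k) {j : ℕ} (hj : j < 3 * k) :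
    Disjoint ({none, some 0} : Finset (W k))
      ({some ((2 * j + 1 : ℕ) : Z k), some ((2 * j + 2 : ℕ) : Z k)} : Finset (W k)) := by
  rw [Finset.disjoint_left]
  intro w hw hw'
  simp only [Finset.mem_insert, Finset.mem_singleton] at hw hw'
  rcases hw with rfl | rfl
  · rcases hw' with h | h <;> exact nomatch h
  · rcases hw' with h | h
    · rw [Option.some.injEq] at h
      have h0 : ((0 : ℕ) : Z k) = ((2 * j + 1 : ℕ) : Z k) := by rw [Nat.cast_zero]; exact h
      have := cast_inj_lt (by omega) (by omega) h0; omega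
    · rw [Option.some.injEq] at h
      have h0 : ((0 : ℕ) : Z k) = ((2 * j + 2 : ℕ) : Z k) := by rw [Nat.cast_zero]; exact h
      have := cast_inj_lt (by omega) (by omega) h0; omega

lemma disj_Qm (hk : 1 ≤ k) : ∀ s ∈ Qm k, ∀ t ∈ Qm k, s ≠ t → Disjoint s t := by
  intro s hs t ht hst
  rcases mem_Qm_elim hs with rfl | ⟨j, hj, rfl⟩ <;>
    rcases mem_Qm_elim ht with rfl | ⟨j', hj', rfl⟩
  · exact absurd rfl hst
  · exact disj_base_pair hk hj'
  · exact (disj_base_pair hk hj).symm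
  · have hjj : j ≠ j' := fun h => hst (by rw [h])
    rw [Finset.disjoint_left]
    intro w hw hw'
    simp only [Finset.mem_insert, Finset.mem_singleton] at hw hw'
    rcases hw with rfl | rfl <;> rcases hw' with h | h <;>
      · rw [Option.some.injEq] at h
        have := cast_inj_lt (by omega) (by omega) h
        omega

lemma codeg_Qm (hk : 1 ≤ k) : ∀ s ∈ Qm k, codegPair (H0 k) s ≤ 5 := by
  intro s hs
  rcases mem_Qm_elim hs with rfl | ⟨j, hj, rfl⟩
  · exact h0_inf_zero hk
  · have he : ((2 * j + 2 : ℕ) : Z k) = ((2 * j + 1 : ℕ) : Z k) + 1 := by push_cast; ring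
    rw [he]
    exact h0_one hk _

lemma codeg_map_emb {n : ℕ} (f : W k ↪ Fin n) (H : Multiset (Finset (W k)))
    (pr : Finset (W k)) :
    codegPair (H.map (Finset.map f)) (pr.map f) = codegPair H pr := by
  rw [codeg_eq, codeg_eq, Multiset.countP_map, Multiset.countP_eq_card_filter]
  congr 1
  apply Multiset.filter_congr
  intro t _
  exact ⟨fun h => Finset.map_subset_map.mp h, fun h => Finset.map_subset_map.mpr h⟩

end S17


/-- for `ν ≡ 2 (mod 6)`, `ν ≥ 8`, there is a `PTS(ν, 6)` with exactly
`(6·C(ν,2) − ν − 1)/3` triples whose leave contains `ν/2` pairwise disjoint edges. -/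
theorem stmt_17 (ν : ℕ) (hge : 8 ≤ ν) (hmod : ν % 6 = 2) :
    ∃ H : Multiset (Finset (Fin ν)),
      (∀ t ∈ H, t.card = 3) ∧
      (∀ x y : Fin ν, x ≠ y → codegPair H {x, y} ≤ 6) ∧
      Multiset.card H = (6 * ν.choose 2 - ν - 1) / 3 ∧
      ∃ P : Finset (Finset (Fin ν)),
        P.card = ν / 2 ∧
        (∀ p ∈ P, p.card = 2) ∧
        (∀ p ∈ P, ∀ q ∈ P, p ≠ q → Disjoint p q) ∧
        (∀ p ∈ P, codegPair H p < 6) := by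
  obtain ⟨k, rfl⟩ : ∃ k, ν = 6 * k + 2 := ⟨(ν - 2) / 6, by omega⟩
  have hk : 1 ≤ k := by omega
  have hcard : Fintype.card (S17.W k) = 6 * k + 2 := by
    rw [Fintype.card_option, S17.card_Z]
  let e : S17.W k ≃ Fin (6 * k + 2) := Fintype.equivFinOfCardEq hcard
  have htrans : ∀ pr : Finset (S17.W k),
      codegPair ((S17.H0 k).map (Finset.map e.toEmbedding)) (pr.map e.toEmbedding)
        = codegPair (S17.H0 k) pr := fun pr => S17.codeg_map_emb e.toEmbedding _ pr
  refine ⟨(S17.H0 k).map (Finset.map e.toEmbedding), ?_, ?_, ?_, ?_⟩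
  · intro t ht
    obtain ⟨t0, ht0, rfl⟩ := Multiset.mem_map.mp ht
    rw [Finset.card_map]
    exact S17.card3_H0 hk t0 ht0
  · intro x y hxy
    have hpair : ({x, y} : Finset (Fin (6 * k + 2)))
        = Finset.map e.toEmbedding {e.symm x, e.symm y} := by
      rw [Finset.map_insert, Finset.map_singleton]
      simp
    rw [hpair, htrans]
    have hne : e.symm x ≠ e.symm y := fun h => hxy (by
      have := congrArg e h; simpa using this)
    rcases hx : e.symm x with _ | p <;> rcases hy : e.symm y with _ | q <;>
      [skip; skip; skip; skip] <;> (try rw [hx] at hne) <;> (try rw [hy] at hne)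
    · exact absurd rfl hne
    · exact S17.h0_inf_le hk q
    · rw [Finset.pair_comm]
      exact S17.h0_inf_le hk p
    · exact S17.h0_zz hk p q (by simpa using hne)
  · rw [Multiset.card_map, S17.card_H0 hk]
    have hch : (6 * k + 2).choose 2 = (3 * k + 1) * (6 * k + 1) := by
      rw [Nat.choose_two_right]
      have h1 : 6 * k + 2 - 1 = 6 * k + 1 := by omega
      rw [h1]
      have h2 : (6 * k + 2) * (6 * k + 1) = 2 * ((3 * k + 1) * (6 * k + 1)) := by ring
      rw [h2, Nat.mul_div_cancel_left _ (by norm_num : 0 < 2)]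
    rw [hch]
    have h6 : 6 * ((3 * k + 1) * (6 * k + 1)) = 108 * (k * k) + 54 * k + 6 := by ring
    rw [h6]
    generalize k * k = K
    omega
  · refine ⟨(S17.Qm k).image (Finset.map e.toEmbedding), ?_, ?_, ?_, ?_⟩
    · rw [Finset.card_image_of_injective _ (Finset.map_injective e.toEmbedding),
        S17.card_Qm hk]
      omega
    · intro p hp
      obtain ⟨s, hs, rfl⟩ := Finset.mem_image.mp hp
      rw [Finset.card_map]
      exact S17.card2_Qm hk s hs
    · intro p hp q hq hpq
      obtain ⟨s, hs, rfl⟩ := Finset.mem_image.mp hp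
      obtain ⟨t, ht, rfl⟩ := Finset.mem_image.mp hq
      have hst : s ≠ t := fun h => hpq (by rw [h])
      exact (Finset.disjoint_map _).mpr (S17.disj_Qm hk s hs t ht hst)
    · intro p hp
      obtain ⟨s, hs, rfl⟩ := Finset.mem_image.mp hp
      rw [htrans s]
      exact lt_of_le_of_lt (S17.codeg_Qm hk s hs) (by norm_num)
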